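/- Let n = m² with m > 1. Then there exists a subgroup U of S_n isomorphic to ℤ/mℤ × ℤ/mℤ such that Sha²_ω(U, M_n) ≠ 0, where M_n is viewed as a ℤ[U]-module by restriction. -/

import Mathlib

/-! Preliminaries: a lightweight theory of `G`-modules (abelian groups with a
distributive `G`-action, i.e. `ℤ[G]`-modules), lattices, permutation modules,
flasque modules and flasque resolutions, the norm-one-torus character lattice
`Mn n` over the symmetric group `S_n`, and low-degree group cohomology with
the invariant `Ш²_ω`. -/

open Equiv

universe u

/-- A `G`-module: an additive commutative group with a distributive `G`-action
(equivalently, a `ℤ[G]`-module). -/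
structure GMod (G : Type u) [Group G] : Type (u + 1) where
  carrier : Type u
  [isAddCommGroup : AddCommGroup carrier]
  [isDistribMulAction : DistribMulAction G carrier]

attribute [instance] GMod.isAddCommGroup GMod.isDistribMulAction

namespace GMod

variable {G : Type u} [Group G]

instance : CoeSort (GMod G) (Type u) := ⟨GMod.carrier⟩

/-- A morphism of `G`-modules is an additive map commuting with the `G`-action. -/
def IsEquivariant {M N : GMod G} (f : M →+ N) : Prop :=
  ∀ (g : G) (m : M), f (g • m) = g • f m

/-- Two `G`-modules are isomorphic if there is an equivariant additive equivalence. -/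
def Iso (M N : GMod G) : Prop :=
  ∃ e : M ≃+ N, ∀ (g : G) (m : M), e (g • m) = g • e m

/-- Restriction of a `G`-module along a group homomorphism `φ : H →* G`. -/
def res (M : GMod G) {H : Type u} [Group H] (φ : H →* G) : GMod H where
  carrier := M
  isDistribMulAction :=
    { smul := fun h m => φ h • m
      one_smul := fun m => by show φ 1 • m = m; simp
      mul_smul := fun a b m => by
        show φ (a * b) • m = φ a • (φ b • m)
        rw [map_mul, mul_smul]
      smul_zero := fun a => by show φ a • (0 : M.carrier) = 0; simp
      smul_add := fun a x y => by
        show φ a • (x + y) = φ a • x + φ a • y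
        simp [smul_add] }

/-- The direct sum of two `G`-modules. -/
def prod (M N : GMod G) : GMod G where
  carrier := M × N

/-- The direct sum of `k` copies of a `G`-module. -/
def copies (k : ℕ) (M : GMod G) : GMod G where
  carrier := Fin k → M

/-- A trivial `G`-module. -/
def triv (G : Type u) [Group G] (A : Type u) [AddCommGroup A] : GMod G where
  carrier := A
  isDistribMulAction :=
    { smul := fun _ a => a
      one_smul := fun _ => rfl
      mul_smul := fun _ _ _ => rfl
      smul_zero := fun _ => rfl
      smul_add := fun _ _ _ => rfl }

/-- The permutation `G`-module `ℤ[X]` attached to an action `φ : G →* Perm X`,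
realized as functions `X → ℤ` with `(g • f) x = f ((φ g)⁻¹ x)`. -/
def permMod {X : Type u} (φ : G →* Equiv.Perm X) : GMod G where
  carrier := X → ℤ
  isDistribMulAction :=
    { smul := fun g f => fun x => f ((φ g)⁻¹ x)
      one_smul := fun f => by funext x; show f ((φ 1)⁻¹ x) = f x; simp
      mul_smul := fun g h f => by
        funext x
        show f ((φ (g * h))⁻¹ x) = f ((φ h)⁻¹ ((φ g)⁻¹ x))
        rw [map_mul, mul_inv_rev, Equiv.Perm.mul_apply]
      smul_zero := fun g => rfl
      smul_add := fun g a b => rfl }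

/-- The subgroup of `X → ℤ` generated by the all-ones vector (for `X = G` this
is `ℤ · N_G`, the span of the norm element of the group algebra). -/
def normSub (X : Type u) : AddSubgroup (X → ℤ) :=
  AddSubgroup.zmultiples (fun _ => (1 : ℤ))

/-- The additive endomorphism of `X → ℤ` induced by a permutation of `X`. -/
def permHomAdd {X : Type u} (σ : Equiv.Perm X) : (X → ℤ) →+ (X → ℤ) where
  toFun f := fun x => f (σ⁻¹ x)
  map_zero' := rfl
  map_add' _ _ := rfl

theorem normSub_le_comap {X : Type u} (σ : Equiv.Perm X) :
    normSub X ≤ (normSub X).comap (permHomAdd σ) := by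
  intro f hf
  rcases AddSubgroup.mem_zmultiples_iff.mp hf with ⟨k, rfl⟩
  exact AddSubgroup.mem_zmultiples_iff.mpr ⟨k, by funext x; simp [permHomAdd]⟩

/-- The quotient of the permutation module `ℤ[X]` by the span of the all-ones
vector, as a `G`-module.  For `X = Fin n` with the tautological action of
`S_n` this is the lattice `M_n`; for `X = G` with the regular action this is
`ℤ[G]/ℤ·N_G`. -/
def permModQuot {X : Type u} (φ : G →* Equiv.Perm X) : GMod G where
  carrier := (X → ℤ) ⧸ normSub X
  isDistribMulAction :=
    { smul := fun g q =>
        QuotientAddGroup.map _ _ (permHomAdd (φ g)) (normSub_le_comap (φ g)) q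
      one_smul := fun q => QuotientAddGroup.induction_on q (fun f => by
        show QuotientAddGroup.map _ _ (permHomAdd (φ 1)) _ (QuotientAddGroup.mk f)
            = QuotientAddGroup.mk f
        rw [QuotientAddGroup.map_mk]
        congr 1
        funext x
        simp [permHomAdd])
      mul_smul := fun g h q => QuotientAddGroup.induction_on q (fun f => by
        show QuotientAddGroup.map _ _ (permHomAdd (φ (g * h))) _ (QuotientAddGroup.mk f)
            = QuotientAddGroup.map _ _ (permHomAdd (φ g)) _
              (QuotientAddGroup.map _ _ (permHomAdd (φ h)) _ (QuotientAddGroup.mk f))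
        rw [QuotientAddGroup.map_mk, QuotientAddGroup.map_mk, QuotientAddGroup.map_mk]
        congr 1
        funext x
        simp [permHomAdd, map_mul, mul_inv_rev, Equiv.Perm.mul_apply])
      smul_zero := fun g => map_zero _
      smul_add := fun g a b => map_add _ a b }

/-- The character lattice `M_n = ℤ[S_n/S_{n-1}] / ℤ·(1,…,1)` of the norm-one
torus of a degree-`n` generic extension: the quotient of `Fin n → ℤ` (with the
coordinate-permuting action of `S_n`) by the span of the all-ones vector. -/
def Mn (n : ℕ) : GMod (Equiv.Perm (Fin n)) :=
  permModQuot (MonoidHom.id (Equiv.Perm (Fin n)))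

/-- The natural permutation module `Fin n → ℤ` of `S_n`. -/
def stdMod (n : ℕ) : GMod (Equiv.Perm (Fin n)) :=
  permMod (MonoidHom.id (Equiv.Perm (Fin n)))

/-- The regular `G`-module `ℤ[G]`, realized as functions `G → ℤ`. -/
def regular (G : Type u) [Group G] : GMod G :=
  permMod (MulAction.toPermHom G G)

/-- The quotient `ℤ[G]/ℤ·N_G` of the regular module by the span of the norm
element `N_G = Σ_{g ∈ G} g`. -/
def regModNorm (G : Type u) [Group G] : GMod G :=
  permModQuot (MulAction.toPermHom G G)

/-- A `G`-lattice: a `G`-module that is finitely generated and free over `ℤ`. -/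
def IsLattice (M : GMod G) : Prop :=
  Module.Free ℤ M ∧ Module.Finite ℤ M

/-- A permutation `G`-lattice: one admitting a finite `ℤ`-basis permuted by `G`. -/
def IsPermutation (M : GMod G) : Prop :=
  ∃ (ι : Type u) (_ : Finite ι) (b : Module.Basis ι ℤ M) (f : G →* Equiv.Perm ι),
    ∀ (g : G) (i : ι), g • b i = b (f g i)

/-- A stably permutation `G`-module: `N ⊕ P ≅ Q` for permutation modules `P, Q`. -/
def IsStablyPermutation (N : GMod G) : Prop :=
  ∃ P Q : GMod G, P.IsPermutation ∧ Q.IsPermutation ∧ Iso (N.prod P) Q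

/-- A flasque `G`-module: `Ĥ⁻¹(G', N) = 0` for every subgroup `G' ≤ G`, i.e.
every `x` killed by the norm of `G'` is a sum of elements `g • y - y`. -/
def IsFlasque [Finite G] (N : GMod G) : Prop :=
  ∀ (H : Subgroup G) (x : N),
    (∑ g ∈ (Set.toFinite (H : Set G)).toFinset, g • x) = 0 →
      x ∈ AddSubgroup.closure {z : N.carrier | ∃ g ∈ H, ∃ y : N.carrier, z = g • y - y}

/-- A flasque resolution `0 → M → S → N → 0`: a short exact sequence of
`G`-lattices with `S` a permutation module and `N` flasque. -/
def IsFlasqueResolution [Finite G] (M S N : GMod G) : Prop :=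
  M.IsLattice ∧ S.IsLattice ∧ N.IsLattice ∧ S.IsPermutation ∧ N.IsFlasque ∧
    ∃ (i : M →+ S) (p : S →+ N),
      IsEquivariant i ∧ IsEquivariant p ∧
        Function.Injective i ∧ Function.Surjective p ∧ i.range = p.ker

/-! ### Low-degree group cohomology via inhomogeneous cocycles. -/

/-- Inhomogeneous 2-cocycles of `G` with values in `M`. -/
def twoCocycles (M : GMod G) : AddSubgroup (G → G → M.carrier) where
  carrier := {f | ∀ g h k : G, g • f h k + f g (h * k) = f (g * h) k + f g h}
  zero_mem' := by intro g h k; simp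
  add_mem' := by
    intro a b ha hb g h k
    simp only [Pi.add_apply, smul_add]
    rw [add_add_add_comm, ha g h k, hb g h k, add_add_add_comm]
  neg_mem' := by
    intro a ha g h k
    simp only [Pi.neg_apply, smul_neg, ← neg_add, ha g h k]

/-- The differential sending a 1-cochain to a 2-coboundary. -/
def dOne (M : GMod G) : (G → M.carrier) →+ (G → G → M.carrier) where
  toFun c := fun g h => g • c h - c (g * h) + c g
  map_zero' := by funext g h; simp
  map_add' a b := by
    funext g h
    simp only [Pi.add_apply, smul_add]
    abel

/-- `H²(G, M)`: 2-cocycles modulo 2-coboundaries. -/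
def H2 (M : GMod G) : Type u :=
  twoCocycles M ⧸ ((dOne M).range.addSubgroupOf (twoCocycles M))

instance (M : GMod G) : AddCommGroup (H2 M) :=
  inferInstanceAs (AddCommGroup (_ ⧸ _))

/-- 1-cocycles (crossed homomorphisms) of `G` with values in `M`. -/
def oneCocycles (M : GMod G) : AddSubgroup (G → M.carrier) where
  carrier := {f | ∀ g h : G, f (g * h) = g • f h + f g}
  zero_mem' := by intro g h; simp
  add_mem' := by
    intro a b ha hb g h
    simp only [Pi.add_apply, smul_add, ha g h, hb g h]
    abel
  neg_mem' := by
    intro a ha g h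
    simp only [Pi.neg_apply, smul_neg, ha g h]
    abel

/-- The differential sending a 0-cochain to a 1-coboundary. -/
def dZero (M : GMod G) : M.carrier →+ (G → M.carrier) where
  toFun m := fun g => g • m - m
  map_zero' := by funext g; simp
  map_add' a b := by
    funext g
    simp only [Pi.add_apply, smul_add]
    abel

/-- `H¹(G, M)`: 1-cocycles modulo 1-coboundaries. -/
def H1 (M : GMod G) : Type u :=
  oneCocycles M ⧸ ((dZero M).range.addSubgroupOf (oneCocycles M))

instance (M : GMod G) : AddCommGroup (H1 M) :=
  inferInstanceAs (AddCommGroup (_ ⧸ _))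

/-- Restriction of 2-cocycles along a group homomorphism `φ : H →* G`. -/
def resTwoCocycles (M : GMod G) {H : Type u} [Group H] (φ : H →* G) :
    twoCocycles M →+ twoCocycles (M.res φ) where
  toFun f := ⟨fun a b => f.1 (φ a) (φ b), by
    intro a b c
    show φ a • f.1 (φ b) (φ c) + f.1 (φ a) (φ (b * c))
        = f.1 (φ (a * b)) (φ c) + f.1 (φ a) (φ b)
    rw [map_mul, map_mul]
    exact f.2 (φ a) (φ b) (φ c)⟩
  map_zero' := rfl
  map_add' _ _ := rfl

theorem coboundaries_le_comap_resTwoCocycles (M : GMod G) {H : Type u} [Group H]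
    (φ : H →* G) :
    ((dOne M).range.addSubgroupOf (twoCocycles M)) ≤
      (((dOne (M.res φ)).range.addSubgroupOf (twoCocycles (M.res φ))).comap
        (resTwoCocycles M φ)) := by
  intro f hf
  rcases hf with ⟨c, hc⟩
  refine ⟨fun h => c (φ h), ?_⟩
  have hc' : ∀ g h : G, g • c h - c (g * h) + c g = f.1 g h := fun g h =>
    congrFun (congrFun hc g) h
  funext a b
  show φ a • c (φ b) - c (φ (a * b)) + c (φ a) = f.1 (φ a) (φ b)
  rw [map_mul]
  exact hc' (φ a) (φ b)

/-- The restriction map `H²(G, M) → H²(H, M)` along `φ : H →* G`. -/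
def resH2 (M : GMod G) {H : Type u} [Group H] (φ : H →* G) :
    H2 M →+ H2 (M.res φ) :=
  QuotientAddGroup.map _ _ (resTwoCocycles M φ)
    (coboundaries_le_comap_resTwoCocycles M φ)

/-- `Ш²_ω(G, M)`: the subgroup of `H²(G, M)` of classes whose restriction to
every cyclic subgroup `⟨g⟩ ≤ G` vanishes. -/
def Sha2omega (M : GMod G) : AddSubgroup (H2 M) :=
  ⨅ g : G, (resH2 M ((Subgroup.zpowers g).subtype)).ker

end GMod

open GMod


open Equiv GMod

namespace ShaAux

variable {m n : ℕ} 

/-- translation permutation -/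
def pi (e : (ZMod m × ZMod m) ≃ Fin n) (v : ZMod m × ZMod m) : Equiv.Perm (Fin n) :=
  e.permCongr (Equiv.addLeft v)

def rho (e : (ZMod m × ZMod m) ≃ Fin n) :
    Multiplicative (ZMod m × ZMod m) →* Equiv.Perm (Fin n) where
  toFun v := pi e v.toAdd
  map_one' := by ext x; simp [pi]
  map_mul' a b := by
    ext x
    simp [pi, Equiv.permCongr_apply, Equiv.Perm.mul_apply, add_assoc]

theorem rho_injective (e : (ZMod m × ZMod m) ≃ Fin n) : Function.Injective (rho e) := by
  intro a b h
  have := congrArg (fun p : Equiv.Perm (Fin n) => e.symm (p (e 0))) h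
  simpa [rho, pi, Equiv.permCongr_apply] using this


variable (e : (ZMod m × ZMod m) ≃ Fin n)

/-- The subgroup. -/
def Ue : Subgroup (Equiv.Perm (Fin n)) := (rho e).range

/-- element constructor -/
def uu (v : ZMod m × ZMod m) : ↥(Ue e) :=
  ⟨rho e (Multiplicative.ofAdd v), ⟨Multiplicative.ofAdd v, rfl⟩⟩

theorem uu_mul (v w : ZMod m × ZMod m) : uu e (v + w) = uu e v * uu e w := by
  apply Subtype.ext
  show rho e (Multiplicative.ofAdd (v + w)) = rho e (Multiplicative.ofAdd v) * rho e (Multiplicative.ofAdd w)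
  rw [← map_mul]
  rfl

theorem uu_injective : Function.Injective (uu e) := by
  intro a b h
  have := rho_injective e (congrArg Subtype.val h)
  exact congrArg Multiplicative.toAdd this

theorem uu_surjective : Function.Surjective (uu e) := by
  rintro ⟨x, a, rfl⟩
  exact ⟨a.toAdd, rfl⟩

/-- inverse coordinate -/
noncomputable def nu (x : ↥(Ue e)) : ZMod m × ZMod m :=
  (uu_surjective e x).choose

theorem uu_nu (x : ↥(Ue e)) : uu e (nu e x) = x := (uu_surjective e x).choose_spec

theorem nu_uu (v : ZMod m × ZMod m) : nu e (uu e v) = v :=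
  uu_injective e (uu_nu e (uu e v))

theorem uu_zero : uu e 0 = 1 := by
  apply Subtype.ext
  show rho e 1 = 1
  exact map_one _

theorem uu_pow (v : ZMod m × ZMod m) (k : ℕ) : (uu e v) ^ k = uu e (k • v) := by
  induction k with
  | zero => simpa using (uu_zero e).symm
  | succ k ih => rw [pow_succ, ih, ← uu_mul, succ_nsmul]


/-- The restricted module. -/
abbrev Mq : GMod ↥(Ue e) := (Mn n).res (Ue e).subtype

/-- shift of a function on V -/
def shift (v : ZMod m × ZMod m) (h : ZMod m × ZMod m → ℤ) : ZMod m × ZMod m → ℤ :=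
  fun χ => h (χ - v)

/-- The transport hom into the module carrier. -/
def MkHom : ((ZMod m × ZMod m) → ℤ) →+ (Mq e).carrier :=
  (QuotientAddGroup.mk' (normSub (Fin n))).comp
    { toFun := fun h => h ∘ e.symm
      map_zero' := rfl
      map_add' := fun _ _ => rfl }

theorem smul_Mk (v : ZMod m × ZMod m) (h : (ZMod m × ZMod m) → ℤ) :
    (uu e v) • (MkHom e h) = MkHom e (shift v h) := by
  show QuotientAddGroup.map _ _ (permHomAdd ((MonoidHom.id _) ((Ue e).subtype (uu e v))))
      (normSub_le_comap _) (QuotientAddGroup.mk (h ∘ e.symm))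
    = QuotientAddGroup.mk (shift v h ∘ e.symm)
  rw [QuotientAddGroup.map_mk]
  congr 1
  funext x
  show h (e.symm ((pi e v)⁻¹ x)) = h (e.symm x - v)
  have : (pi e v)⁻¹ x = e (-v + e.symm x) := rfl
  rw [this, Equiv.symm_apply_apply, neg_add_eq_sub]

theorem mem_normSub (f : Fin n → ℤ) (k : ℤ) (hf : ∀ x, f x = k) : f ∈ normSub (Fin n) := by
  refine AddSubgroup.mem_zmultiples_iff.mpr ⟨k, ?_⟩
  funext x
  simp [hf x]

theorem Mk_const (k : ℤ) : MkHom e (fun _ => k) = 0 := by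
  exact (QuotientAddGroup.eq_zero_iff _).mpr (mem_normSub _ k (fun _ => rfl))

theorem Mk_eq_iff (h h' : (ZMod m × ZMod m) → ℤ) :
    MkHom e h = MkHom e h' ↔ ∃ k : ℤ, ∀ χ, h χ = h' χ + k := by
  constructor
  · intro hh
    have : MkHom e (h - h') = 0 := by rw [map_sub, hh, sub_self]
    have hmem : (h - h') ∘ e.symm ∈ normSub (Fin n) := (QuotientAddGroup.eq_zero_iff _).mp this
    rcases AddSubgroup.mem_zmultiples_iff.mp hmem with ⟨k, hk⟩
    refine ⟨k, fun χ => ?_⟩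
    have := congrFun hk (e χ)
    simp only [Function.comp_apply, Equiv.symm_apply_apply] at this
    have h2 : h χ - h' χ = k := by
      have := this.symm
      simpa [Pi.sub_apply] using this
    omega
  · rintro ⟨k, hk⟩
    have : h = h' + (fun _ => k) := by funext χ; simp [hk χ]
    rw [this, map_add, Mk_const, add_zero]


/-! ### The explicit cocycle: arithmetic core -/

def kappa (a b : ZMod m) : ℤ := if m ≤ a.val + b.val then 1 else 0

theorem val_add_or (hm : 0 < m) (a b : ZMod m) :
    ((a + b).val : ℤ) = a.val + b.val ∨ ((a + b).val : ℤ) = a.val + b.val - m := by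
  haveI : NeZero m := ⟨by omega⟩
  have h1 : (a + b).val = (a.val + b.val) % m := ZMod.val_add a b
  have h2 : a.val < m := ZMod.val_lt a
  have h3 : b.val < m := ZMod.val_lt b
  by_cases h : a.val + b.val < m
  · left; rw [h1, Nat.mod_eq_of_lt h]; push_cast; ring
  · right
    have : (a.val + b.val) % m = a.val + b.val - m := by
      rw [Nat.mod_eq_sub_mod (by omega)]
      exact Nat.mod_eq_of_lt (by omega)
    rw [h1, this]
    push_cast [show m ≤ a.val + b.val by omega]
    ring

theorem val_lt' (hm : 0 < m) (a : ZMod m) : a.val < m := by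
  haveI : NeZero m := ⟨by omega⟩
  exact ZMod.val_lt a

set_option maxHeartbeats 2000000 in
theorem key_arith (hm : 0 < m) (a₁ a₂ a₃ b₁ b₂ b₃ y : ZMod m) :
    (-(kappa a₂ a₃) * ((y - b₁ - b₂ - b₃).val : ℤ)
        + a₂.val * (if (y - b₁ - b₂).val < b₃.val then 1 else 0))
      + (-(kappa a₁ (a₂ + a₃)) * ((y - b₁ - (b₂ + b₃)).val : ℤ)
        + a₁.val * (if (y - b₁).val < (b₂ + b₃).val then 1 else 0))
      - (-(kappa (a₁ + a₂) a₃) * ((y - (b₁ + b₂) - b₃).val : ℤ)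
        + ((a₁ + a₂).val : ℤ) * (if (y - (b₁ + b₂)).val < b₃.val then 1 else 0))
      - (-(kappa a₁ a₂) * ((y - b₁ - b₂).val : ℤ)
        + a₁.val * (if (y - b₁).val < b₂.val then 1 else 0))
      = kappa a₁ a₂ * b₃.val - a₁.val * kappa b₂ b₃ := by
  have e1 : y - b₁ - (b₂ + b₃) = y - b₁ - b₂ - b₃ := by simp [sub_sub, add_assoc]
  have e2 : y - (b₁ + b₂) = y - b₁ - b₂ := by simp [sub_sub]
  rw [e1, e2]
  set p := y - b₁ with hp
  set q := p - b₂ with hq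
  set r := q - b₃ with hr
  have hq' : q + b₂ = p := sub_add_cancel p b₂
  have hr' : r + b₃ = q := sub_add_cancel q b₃
  have hr2' : r + (b₂ + b₃) = p := by rw [hr, hq, sub_sub, sub_add_cancel]
  have H1 := val_add_or hm q b₂; rw [hq'] at H1
  have H2 := val_add_or hm r b₃; rw [hr'] at H2
  have H3 := val_add_or hm r (b₂ + b₃); rw [hr2'] at H3
  have H4 := val_add_or hm b₂ b₃
  have H5 := val_add_or hm a₁ a₂
  have H6 := val_add_or hm a₂ a₃
  have H7 := val_add_or hm (a₁ + a₂) a₃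
  have H8 := val_add_or hm a₁ (a₂ + a₃); rw [← add_assoc] at H8
  have B1 := val_lt' hm p; have B2 := val_lt' hm q; have B3 := val_lt' hm r
  have B4 := val_lt' hm b₂; have B5 := val_lt' hm b₃; have B6 := val_lt' hm (b₂ + b₃)
  have B7 := val_lt' hm a₁; have B8 := val_lt' hm a₂; have B9 := val_lt' hm a₃
  have B10 := val_lt' hm (a₁ + a₂); have B11 := val_lt' hm (a₂ + a₃)
  have B12 := val_lt' hm (a₁ + a₂ + a₃)
  unfold kappa
  split_ifs <;> omega


def Ffun (v w : ZMod m × ZMod m) : (ZMod m × ZMod m) → ℤ := fun χ =>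
  -(kappa v.1 w.1) * ((χ.2 - v.2 - w.2).val : ℤ)
    + (v.1.val : ℤ) * (if (χ.2 - v.2).val < w.2.val then 1 else 0)

def Cf (v₁ v₂ v₃ : ZMod m × ZMod m) : ℤ :=
  kappa v₁.1 v₂.1 * v₃.2.val - v₁.1.val * kappa v₂.2 v₃.2

theorem Ffun_cocycle (hm : 0 < m) (v₁ v₂ v₃ χ : ZMod m × ZMod m) :
    shift v₁ (Ffun v₂ v₃) χ + Ffun v₁ (v₂ + v₃) χ - Ffun (v₁ + v₂) v₃ χ - Ffun v₁ v₂ χ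
      = Cf v₁ v₂ v₃ := by
  have H := key_arith hm v₁.1 v₂.1 v₃.1 v₁.2 v₂.2 v₃.2 χ.2
  simp only [shift, Ffun, Cf, Prod.snd_sub, Prod.fst_add, Prod.snd_add]
  convert H using 2

variable (hm : 0 < m)

/-- the module-level 2-cocycle -/
noncomputable def Fc (x y : ↥(Ue e)) : (Mq e).carrier :=
  MkHom e (Ffun (nu e x) (nu e y))

theorem nu_mul (x y : ↥(Ue e)) : nu e (x * y) = nu e x + nu e y := by
  have : x * y = uu e (nu e x + nu e y) := by
    rw [uu_mul, uu_nu, uu_nu]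
  rw [this, nu_uu]

include hm in
theorem Fc_cocycle (g h k : ↥(Ue e)) :
    g • Fc e h k + Fc e g (h * k) = Fc e (g * h) k + Fc e g h := by
  set v₁ := nu e g; set v₂ := nu e h; set v₃ := nu e k
  have hg : g = uu e v₁ := (uu_nu e g).symm
  have h1 : Fc e h k = MkHom e (Ffun v₂ v₃) := rfl
  have h2 : g • Fc e h k = MkHom e (shift v₁ (Ffun v₂ v₃)) := by
    rw [h1, hg, smul_Mk]
  rw [h2]
  show _ + MkHom e (Ffun (nu e g) (nu e (h*k))) = MkHom e (Ffun (nu e (g*h)) (nu e k)) + _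
  rw [nu_mul, nu_mul]
  have h3 : Fc e g h = MkHom e (Ffun v₁ v₂) := rfl
  rw [h3, ← map_add, ← map_add]
  rw [Mk_eq_iff]
  exact ⟨Cf v₁ v₂ v₃, fun χ => by have := Ffun_cocycle hm v₁ v₂ v₃ χ; simp only [Pi.add_apply]; linarith⟩

noncomputable def fcoc : twoCocycles (Mq e) :=
  ⟨fun x y => Fc e x y, fun g h k => Fc_cocycle e hm g h k⟩


theorem Mk_surjective : Function.Surjective (MkHom e) := by
  intro q
  refine QuotientAddGroup.induction_on q (fun f => ⟨f ∘ e, ?_⟩)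
  show QuotientAddGroup.mk ((f ∘ e) ∘ e.symm) = QuotientAddGroup.mk f
  congr 1
  funext x
  simp

def Bf (v w : ZMod m × ZMod m) : ℤ := (v.1.val : ℤ) * (w.2.val : ℤ)

include hm in
theorem dB_eq (v₁ v₂ v₃ : ZMod m × ZMod m) :
    Bf v₂ v₃ - Bf (v₁ + v₂) v₃ + Bf v₁ (v₂ + v₃) - Bf v₁ v₂ = m * Cf v₁ v₂ v₃ := by
  have H5 := val_add_or hm v₁.1 v₂.1
  have H4 := val_add_or hm v₂.2 v₃.2
  have L1 := val_lt' hm (v₁.1 + v₂.1)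
  have L2 := val_lt' hm (v₂.2 + v₃.2)
  unfold Bf Cf kappa
  simp only [Prod.fst_add, Prod.snd_add]
  split_ifs with h1 h2 h3 <;> rcases H5 with H5 | H5 <;> rcases H4 with H4 | H4 <;>
    first
      | (exfalso; omega)
      | (rw [H5, H4]; push_cast; ring)
      | (rw [H5]; push_cast; ring)
      | (rw [H4]; push_cast; ring)
      | (push_cast; ring)

include hm in
theorem fcoc_not_coboundary (hm1 : 1 < m) :
    (fcoc e hm) ∉ ((dOne (Mq e)).range.addSubgroupOf (twoCocycles (Mq e))) := by
  intro hmem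
  rw [AddSubgroup.mem_addSubgroupOf] at hmem
  rcases hmem with ⟨c, hc⟩
  choose cf hcf using fun v : ZMod m × ZMod m => Mk_surjective e (c (uu e v))
  have hpt : ∀ v₁ v₂ : ZMod m × ZMod m,
      MkHom e (Ffun v₁ v₂) = MkHom e (shift v₁ (cf v₂) - cf (v₁ + v₂) + cf v₁) := by
    intro v₁ v₂
    have H := congrFun (congrFun hc (uu e v₁)) (uu e v₂)
    have H' : (uu e v₁) • c (uu e v₂) - c (uu e v₁ * uu e v₂) + c (uu e v₁)
        = Fc e (uu e v₁) (uu e v₂) := H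
    rw [← uu_mul, ← hcf, ← hcf, ← hcf, smul_Mk, ← map_sub, ← map_add] at H'
    have h2 : Fc e (uu e v₁) (uu e v₂) = MkHom e (Ffun v₁ v₂) := by
      unfold Fc; rw [nu_uu, nu_uu]
    rw [h2] at H'
    exact H'.symm
  have hex : ∀ v₁ v₂ : ZMod m × ZMod m, ∃ k : ℤ, ∀ χ,
      Ffun v₁ v₂ χ = (shift v₁ (cf v₂) - cf (v₁ + v₂) + cf v₁) χ + k := by
    intro v₁ v₂
    exact (Mk_eq_iff e _ _).mp (hpt v₁ v₂)
  choose t ht using hex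
  -- Cf is the coboundary of t
  have hdt : ∀ v₁ v₂ v₃ : ZMod m × ZMod m,
      Cf v₁ v₂ v₃ = t v₂ v₃ - t (v₁ + v₂) v₃ + t v₁ (v₂ + v₃) - t v₁ v₂ := by
    intro v₁ v₂ v₃
    have H := Ffun_cocycle hm v₁ v₂ v₃ 0
    have e₁ := ht v₂ v₃ (0 - v₁)
    have e₂ := ht v₁ (v₂ + v₃) 0
    have e₃ := ht (v₁ + v₂) v₃ 0
    have e₄ := ht v₁ v₂ 0
    have hcf1 : cf (v₁ + (v₂ + v₃)) 0 = cf (v₁ + v₂ + v₃) 0 := by rw [add_assoc]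
    have hcf2' : cf v₃ (0 - (v₁ + v₂)) = cf v₃ (0 - v₁ - v₂) := by
      rw [sub_sub]
    simp only [shift, Pi.sub_apply, Pi.add_apply] at H e₁ e₂ e₃ e₄
    linarith
  -- the integral 2-cocycle B - m t and its antisymmetrization
  set C2 : (ZMod m × ZMod m) → (ZMod m × ZMod m) → ℤ :=
    fun v w => Bf v w - m * t v w with hC2
  have hC : ∀ v₁ v₂ v₃ : ZMod m × ZMod m,
      C2 v₂ v₃ - C2 (v₁ + v₂) v₃ + C2 v₁ (v₂ + v₃) - C2 v₁ v₂ = 0 := by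
    intro v₁ v₂ v₃
    have h1 := dB_eq hm v₁ v₂ v₃
    have h2 := hdt v₁ v₂ v₃
    have h3 : (m:ℤ) * Cf v₁ v₂ v₃
        = m * t v₂ v₃ - m * t (v₁ + v₂) v₃ + m * t v₁ (v₂ + v₃) - m * t v₁ v₂ := by
      rw [h2]; ring
    simp only [hC2]
    linarith
  set A : (ZMod m × ZMod m) → (ZMod m × ZMod m) → ℤ :=
    fun v w => C2 v w - C2 w v with hA
  have hAadd : ∀ x y z : ZMod m × ZMod m, A (x + y) z = A x z + A y z := by
    intro x y z
    have h1 := hC x y z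
    have h2 := hC z x y
    have h3 := hC x z y
    rw [add_comm z x] at h2
    rw [add_comm z y] at h3
    simp only [hA]
    linarith
  set σg : ZMod m × ZMod m := ((1 : ZMod m), (0 : ZMod m)) with hσ
  set τg : ZMod m × ZMod m := ((0 : ZMod m), (1 : ZMod m)) with hτ
  have h0 : A 0 τg = 0 := by
    have := hAadd 0 0 τg
    rw [add_zero] at this
    omega
  have hk : ∀ k : ℕ, A (k • σg) τg = k * A σg τg := by
    intro k
    induction k with
    | zero => simpa using h0
    | succ k ih => rw [succ_nsmul, hAadd, ih]; push_cast; ring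
  have hmσ : m • σg = 0 := by
    rw [hσ]
    simp [Prod.ext_iff, nsmul_eq_mul, ZMod.natCast_self]
  have hfin : (0 : ℤ) = m * A σg τg := by
    rw [← hk m, hmσ, h0]
  have hval : A σg τg = 1 - m * (t σg τg - t τg σg) := by
    simp only [hA, hC2, Bf, hσ, hτ]
    haveI : NeZero m := ⟨by omega⟩
    haveI : Fact (1 < m) := ⟨hm1⟩
    rw [ZMod.val_one _]
    simp [ZMod.val_zero]
    ring
  rw [hval] at hfin
  have hm0 : (m : ℤ) ≠ 0 := by exact_mod_cast hm.ne'
  have h5 : 1 - (m : ℤ) * (t σg τg - t τg σg) = 0 := by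
    rcases mul_eq_zero.mp hfin.symm with h | h
    · exact absurd h hm0
    · exact h
  have h6 : (m : ℤ) * (t σg τg - t τg σg) = 1 := by linarith
  have := Int.eq_one_of_mul_eq_one_right (by positivity) h6
  omega


/-! ### Part D: vanishing of restrictions to cyclic subgroups -/

theorem one_shift (g : ↥(Ue e)) (F : ↥(Ue e) → (Mq e).carrier) :
    ∑ i ∈ Finset.range (orderOf g), F (g ^ (i + 1))
      = ∑ i ∈ Finset.range (orderOf g), F (g ^ i) := by
  have h1 := Finset.sum_range_succ (fun i => F (g ^ i)) (orderOf g)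
  have h2 := Finset.sum_range_succ' (fun i => F (g ^ i)) (orderOf g)
  simp only [pow_orderOf_eq_one, pow_zero] at h1 h2
  have h3 := h1.symm.trans h2
  exact (add_right_cancel h3).symm

theorem shift_pow_sum (g : ↥(Ue e)) (F : ↥(Ue e) → (Mq e).carrier) (K : ℕ) :
    ∑ i ∈ Finset.range (orderOf g), F (g ^ (K + i))
      = ∑ i ∈ Finset.range (orderOf g), F (g ^ i) := by
  induction K with
  | zero => simp
  | succ K ih =>
    calc ∑ i ∈ Finset.range (orderOf g), F (g ^ (K + 1 + i))
        = ∑ i ∈ Finset.range (orderOf g), (fun y => F (g ^ K * y)) (g ^ (i + 1)) := by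
          refine Finset.sum_congr rfl (fun i _ => ?_)
          simp only [← pow_add]
          rw [show K + 1 + i = K + (i + 1) by omega]
      _ = ∑ i ∈ Finset.range (orderOf g), (fun y => F (g ^ K * y)) (g ^ i) :=
          one_shift e g (fun y => F (g ^ K * y))
      _ = ∑ i ∈ Finset.range (orderOf g), F (g ^ (K + i)) := by
          refine Finset.sum_congr rfl (fun i _ => ?_)
          simp only [← pow_add]
      _ = _ := ih

include hm in
theorem EM_invariant (g : ↥(Ue e)) :
    g • (∑ i ∈ Finset.range (orderOf g), Fc e (g ^ i) g)
      = ∑ i ∈ Finset.range (orderOf g), Fc e (g ^ i) g := by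
  rw [Finset.smul_sum]
  have hco : ∀ i : ℕ, g • Fc e (g ^ i) g
      = Fc e (g ^ (1 + i)) g + Fc e g (g ^ i) - Fc e g (g ^ (i + 1)) := by
    intro i
    have H := Fc_cocycle e hm g (g ^ i) g
    have e1 : g * g ^ i = g ^ (1 + i) := by rw [pow_add, pow_one]
    have e2 : g ^ i * g = g ^ (i + 1) := by rw [pow_succ]
    rw [e1, e2] at H
    exact eq_sub_of_add_eq H
  rw [Finset.sum_congr rfl (fun i _ => hco i), Finset.sum_sub_distrib,
    Finset.sum_add_distrib]
  rw [shift_pow_sum e g (fun y => Fc e y g) 1, one_shift e g (fun y => Fc e g y)]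
  abel

include hm in
theorem exists_norm_eq (g : ↥(Ue e)) :
    ∃ w : (Mq e).carrier, ∑ i ∈ Finset.range (orderOf g), (g ^ i) • w
      = ∑ i ∈ Finset.range (orderOf g), Fc e (g ^ i) g := by
  set d := orderOf g with hd
  have hd0 : 0 < d := orderOf_pos g
  set vg := nu e g with hvg
  have hguu : g = uu e vg := (uu_nu e g).symm
  have hgpow : ∀ i : ℕ, g ^ i = uu e (i • vg) := by intro i; rw [hguu, uu_pow]
  have hdvg : d • vg = 0 := by
    apply uu_injective e
    have h1 : uu e (d • vg) = g ^ d := (hgpow d).symm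
    rw [h1, uu_zero]
    exact pow_orderOf_eq_one g
  set Efun : ZMod m × ZMod m → ℤ := fun χ => ∑ i ∈ Finset.range d, Ffun (i • vg) vg χ
    with hEfun
  have hfsum : (fun χ => ∑ i ∈ Finset.range d, Ffun (i • vg) vg χ)
      = ∑ i ∈ Finset.range d, Ffun (i • vg) vg := by
    funext χ; rw [Finset.sum_apply]
  have hEM : ∑ i ∈ Finset.range d, Fc e (g ^ i) g = MkHom e Efun := by
    rw [hEfun, hfsum, map_sum]
    refine Finset.sum_congr rfl (fun i _ => ?_)
    rw [hgpow i]
    show Fc e (uu e (i • vg)) g = _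
    unfold Fc
    rw [nu_uu]
  have hinv := EM_invariant e hm g
  rw [← hd, hEM] at hinv
  rw [hguu, smul_Mk] at hinv
  rcases (Mk_eq_iff e _ _).mp hinv with ⟨lam, hlam⟩
  have hiter : ∀ (k : ℕ) (χ), Efun (χ - k • vg) = Efun χ + k * lam := by
    intro k
    induction k with
    | zero => intro χ; simp
    | succ k ih =>
      intro χ
      have h1 : χ - (k + 1) • vg = (χ - k • vg) - vg := by rw [succ_nsmul]; abel
      rw [h1]
      have h2 : Efun ((χ - k • vg) - vg) = Efun (χ - k • vg) + lam := hlam (χ - k • vg)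
      rw [h2, ih]
      push_cast
      ring
  have hlam0 : lam = 0 := by
    have h := hiter d 0
    rw [hdvg, sub_zero] at h
    have : (d : ℤ) * lam = 0 := by linarith
    rcases mul_eq_zero.mp this with h' | h'
    · exfalso; have : (d:ℤ) ≠ 0 := by exact_mod_cast hd0.ne'
      exact this h'
    · exact h'
  have hstep : ∀ χ, Efun (χ - vg) = Efun χ := by
    intro χ
    have := hlam χ
    rw [hlam0, add_zero] at this
    exact this
  have hcoset : ∀ (k : ℤ) (χ), Efun (χ + k • vg) = Efun χ := by
    intro k
    induction k using Int.induction_on with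
    | zero => intro χ; simp
    | succ k ih =>
      intro χ
      have h1 : χ + ((k : ℤ) + 1) • vg = (χ + (k : ℤ) • vg) + vg := by
        rw [add_smul, one_smul]; abel
      rw [h1]
      have h2 := hstep ((χ + (k : ℤ) • vg) + vg)
      rw [add_sub_cancel_right] at h2
      rw [← h2, ih]
    | pred k ih =>
      intro χ
      have h1 : χ + (-(k : ℤ) - 1) • vg = (χ + (-(k : ℤ)) • vg) - vg := by
        rw [sub_smul, one_smul]; abel
      rw [h1, hstep, ih]
  -- orbit representatives
  set Zg := AddSubgroup.zmultiples vg with hZg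
  set rep : ZMod m × ZMod m → ZMod m × ZMod m :=
    fun χ => (QuotientAddGroup.mk (s := Zg) χ).out with hrep
  have hrep_mk : ∀ χ, (QuotientAddGroup.mk (s := Zg) (rep χ)) = QuotientAddGroup.mk χ :=
    fun χ => Quotient.out_eq _
  have hrep_diff : ∀ χ, ∃ k : ℤ, χ - rep χ = k • vg := by
    intro χ
    have h := (QuotientAddGroup.eq (s := Zg)).mp (hrep_mk χ)
    rcases AddSubgroup.mem_zmultiples_iff.mp h with ⟨k, hk⟩
    exact ⟨k, by rw [sub_eq_neg_add]; exact hk.symm⟩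
  have hrep_shift : ∀ χ (j : ℕ), rep (χ - j • vg) = rep χ := by
    intro χ j
    have hmem : -(χ - j • vg) + χ ∈ Zg := by
      refine AddSubgroup.mem_zmultiples_iff.mpr ⟨(j : ℤ), ?_⟩
      rw [natCast_zsmul]
      abel
    have : (QuotientAddGroup.mk (s := Zg) (χ - j • vg)) = QuotientAddGroup.mk χ :=
      (QuotientAddGroup.eq (s := Zg)).mpr hmem
    simp only [hrep, this]
  set wfun : ZMod m × ZMod m → ℤ := fun χ => if rep χ = χ then Efun χ else 0 with hwfun
  have hsum : ∀ χ, ∑ i ∈ Finset.range d, wfun (χ - i • vg) = Efun χ := by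
    intro χ
    obtain ⟨k, hk⟩ := hrep_diff χ
    set i₀ := (k % (d : ℤ)).toNat with hi₀
    have hd0' : (0 : ℤ) < d := by exact_mod_cast hd0
    have hmod1 : 0 ≤ k % (d : ℤ) := Int.emod_nonneg k (by omega)
    have hmod2 : k % (d : ℤ) < d := Int.emod_lt_of_pos k hd0'
    have hi₀d : i₀ < d := by omega
    have hkvg : (i₀ : ℕ) • vg = k • vg := by
      have h1 : ((i₀ : ℤ)) = k % d := Int.toNat_of_nonneg hmod1
      calc (i₀ : ℕ) • vg = ((i₀ : ℤ)) • vg := (natCast_zsmul vg i₀).symm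
        _ = (k % (d:ℤ)) • vg := by rw [h1]
        _ = (k - (d:ℤ) * (k / d)) • vg := by rw [← Int.emod_def]
        _ = k • vg - ((d:ℤ) * (k / d)) • vg := by rw [sub_zsmul]; abel
        _ = k • vg := by
            rw [mul_comm, mul_zsmul, natCast_zsmul, hdvg, smul_zero, sub_zero]
    have hrepχ : χ - i₀ • vg = rep χ := by
      rw [hkvg, ← hk]; abel
    have huniq : ∀ i ∈ Finset.range d, i ≠ i₀ → wfun (χ - i • vg) = 0 := by
      intro i hi hne
      simp only [hwfun]
      rw [if_neg]
      intro hcond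
      rw [hrep_shift χ i] at hcond
      have h5 : i • vg = i₀ • vg := by
        have h6 : χ - i₀ • vg = χ - i • vg := hrepχ.trans hcond
        exact (sub_right_inj.mp h6).symm
      have h6 : g ^ i = g ^ i₀ := by rw [hgpow, hgpow, h5]
      have h7 : i % d = i₀ % d := pow_eq_pow_iff_modEq.mp h6
      rw [Nat.mod_eq_of_lt (Finset.mem_range.mp hi), Nat.mod_eq_of_lt hi₀d] at h7
      exact hne h7
    rw [Finset.sum_eq_single_of_mem i₀ (Finset.mem_range.mpr hi₀d) huniq]
    simp only [hwfun]
    rw [if_pos (by rw [hrep_shift χ i₀, ← hrepχ])]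
    rw [hrepχ]
    have h8 : rep χ = χ + (-k) • vg := by
      rw [neg_zsmul, ← sub_eq_add_neg, ← hk]; abel
    rw [h8, hcoset]
  refine ⟨MkHom e wfun, ?_⟩
  calc ∑ i ∈ Finset.range d, (g ^ i) • MkHom e wfun
      = ∑ i ∈ Finset.range d, MkHom e (shift (i • vg) wfun) := by
        refine Finset.sum_congr rfl (fun i _ => ?_)
        rw [hgpow i, smul_Mk]
    _ = MkHom e (∑ i ∈ Finset.range d, shift (i • vg) wfun) := (map_sum _ _ _).symm
    _ = MkHom e Efun := by
        congr 1
        funext χ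
        rw [Finset.sum_apply]
        exact hsum χ
    _ = ∑ i ∈ Finset.range d, Fc e (g ^ i) g := hEM.symm


include hm in
theorem res_vanish (g : ↥(Ue e)) :
    ∃ cc : ↥(Subgroup.zpowers g) → (Mq e).carrier,
      ∀ h₁ h₂ : ↥(Subgroup.zpowers g),
        ((h₁ : ↥(Ue e)) • cc h₂) - cc (h₁ * h₂) + cc h₁
          = Fc e (h₁ : ↥(Ue e)) (h₂ : ↥(Ue e)) := by
  classical
  set d := orderOf g with hd
  have hd0 : 0 < d := orderOf_pos g
  obtain ⟨w, hw⟩ := exists_norm_eq e hm g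
  rw [← hd] at hw
  have hex : ∀ h : ↥(Subgroup.zpowers g), ∃ i : ℕ, g ^ i = (h : ↥(Ue e)) := by
    rintro ⟨x, hx⟩
    rcases Subgroup.mem_zpowers_iff.mp hx with ⟨kk, hkk⟩
    refine ⟨(kk % (d : ℤ)).toNat, ?_⟩
    have h1 : (((kk % (d : ℤ)).toNat : ℤ)) = kk % d :=
      Int.toNat_of_nonneg (Int.emod_nonneg kk (by exact_mod_cast hd0.ne'))
    show g ^ ((kk % (d : ℤ)).toNat) = x
    calc g ^ ((kk % (d : ℤ)).toNat) = g ^ (((kk % (d : ℤ)).toNat : ℤ)) :=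
          (zpow_natCast g _).symm
      _ = g ^ (kk % (d : ℤ)) := by rw [h1]
      _ = g ^ kk := by rw [hd]; exact zpow_mod_orderOf g kk
      _ = x := hkk
  set ind : ↥(Subgroup.zpowers g) → ℕ := fun h => Nat.find (hex h) with hindd
  have hind : ∀ h, g ^ (ind h) = (h : ↥(Ue e)) := fun h => Nat.find_spec (hex h)
  have hindlt : ∀ h, ind h < d := by
    intro h
    by_contra hc
    push_neg at hc
    have h1 : g ^ (ind h - d) = (h : ↥(Ue e)) := by
      calc g ^ (ind h - d) = g ^ (ind h - d) * g ^ d := by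
            rw [hd, pow_orderOf_eq_one, mul_one]
        _ = g ^ (ind h - d + d) := (pow_add g _ _).symm
        _ = g ^ (ind h) := by rw [Nat.sub_add_cancel hc]
        _ = _ := hind h
    exact Nat.find_min (hex h) (show ind h - d < ind h by omega) h1
  set f : ↥(Ue e) → ↥(Ue e) → (Mq e).carrier := fun x y => Fc e x y with hf
  have L2 : ∀ x : ↥(Ue e), f x 1 = x • f 1 1 := by
    intro x
    have H := Fc_cocycle e hm x 1 1
    rw [mul_one, mul_one] at H
    have H' : f x 1 + x • f 1 1 = f x 1 + f x 1 := by
      rw [add_comm (f x 1) (x • f 1 1)]; exact H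
    exact (add_left_cancel H').symm
  have L1 : ∀ (x : ↥(Ue e)) (j : ℕ),
      x • ∑ i ∈ Finset.range j, f (g ^ i) g
        = (∑ i ∈ Finset.range j, f (x * g ^ i) g) - f x (g ^ j) + f x 1 := by
    intro x j
    induction j with
    | zero =>
      simp only [Finset.range_zero, Finset.sum_empty, smul_zero, pow_zero]
      abel
    | succ j ih =>
      rw [Finset.sum_range_succ, smul_add, ih, Finset.sum_range_succ]
      have H := Fc_cocycle e hm x (g ^ j) g
      have H' : x • f (g ^ j) g = f (x * g ^ j) g + f x (g ^ j) - f x (g ^ j * g) :=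
        eq_sub_of_add_eq H
      rw [pow_succ, H']
      abel
  refine ⟨fun h => f 1 1 + (∑ i ∈ Finset.range (ind h), (g ^ i) • w)
      - ∑ i ∈ Finset.range (ind h), f (g ^ i) g, ?_⟩
  intro h₁ h₂
  simp only
  set a := ind h₁ with hA
  set b := ind h₂ with hB
  set k := ind (h₁ * h₂) with hK
  have ha : g ^ a = (h₁ : ↥(Ue e)) := hind h₁
  have hb : g ^ b = (h₂ : ↥(Ue e)) := hind h₂
  have hk : g ^ k = ((h₁ * h₂ : ↥(Subgroup.zpowers g)) : ↥(Ue e)) := hind (h₁ * h₂)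
  have hab : g ^ (a + b) = g ^ k := by
    rw [pow_add, ha, hb, hk]
    rfl
  have hcase : a + b = k ∨ a + b = k + d := by
    have h7 : (a + b) % d = k % d := by
      have := pow_eq_pow_iff_modEq.mp hab
      rw [← hd] at this
      exact this
    have h8 : a < d := hindlt h₁
    have h9 : b < d := hindlt h₂
    have h10 : k < d := hindlt (h₁ * h₂)
    rw [Nat.mod_eq_of_lt h10] at h7
    rcases Nat.lt_or_ge (a + b) d with hlt | hge
    · left; rw [Nat.mod_eq_of_lt hlt] at h7; exact h7
    · right
      have h11 : (a + b) % d = a + b - d := by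
        rw [Nat.mod_eq_sub_mod hge, Nat.mod_eq_of_lt (by omega)]
      omega
  rw [← ha, ← hb]
  rw [smul_sub, smul_add]
  rw [L1 (g ^ a) b]
  have hsw : (g ^ a) • ∑ i ∈ Finset.range b, (g ^ i) • w
      = ∑ i ∈ Finset.range b, (g ^ (a + i)) • w := by
    rw [Finset.smul_sum]
    exact Finset.sum_congr rfl (fun i _ => by rw [smul_smul, ← pow_add])
  rw [hsw, ← L2 (g ^ a)]
  have A1 : ∑ i ∈ Finset.range b, (g ^ (a + i)) • w
      = (∑ i ∈ Finset.range (a + b), (g ^ i) • w) - ∑ i ∈ Finset.range a, (g ^ i) • w := by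
    rw [Finset.sum_range_add (fun i => (g ^ i) • w) a b]
    abel
  have A2 : ∑ i ∈ Finset.range b, f (g ^ a * g ^ i) g
      = (∑ i ∈ Finset.range (a + b), f (g ^ i) g) - ∑ i ∈ Finset.range a, f (g ^ i) g := by
    rw [Finset.sum_range_add (fun i => f (g ^ i) g) a b]
    have : ∀ i, f (g ^ a * g ^ i) g = f (g ^ (a + i)) g := fun i => by rw [← pow_add]
    rw [Finset.sum_congr rfl (fun i _ => this i)]
    abel
  rw [A1, A2]
  rcases hcase with hc | hc
  · rw [hc]; abel
  · rw [hc]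
    have B1 : ∑ i ∈ Finset.range (k + d), (g ^ i) • w
        = (∑ i ∈ Finset.range k, (g ^ i) • w) + ∑ i ∈ Finset.range d, (g ^ i) • w := by
      rw [Finset.sum_range_add (fun i => (g ^ i) • w) k d]
      congr 1
      have := shift_pow_sum e g (fun y => y • w) k
      rw [← hd] at this
      exact this
    have B2 : ∑ i ∈ Finset.range (k + d), f (g ^ i) g
        = (∑ i ∈ Finset.range k, f (g ^ i) g) + ∑ i ∈ Finset.range d, f (g ^ i) g := by
      rw [Finset.sum_range_add (fun i => f (g ^ i) g) k d]
      congr 1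
      have := shift_pow_sum e g (fun y => f y g) k
      rw [← hd] at this
      exact this
    rw [B1, B2, hw]
    abel

end ShaAux

open GMod ShaAux in
theorem sha_Mn_nontrivial_of_square (n m : ℕ) (hm : 1 < m) (hn : n = m ^ 2) :
    ∃ U : Subgroup (Equiv.Perm (Fin n)),
      Nonempty (↥U ≃* Multiplicative (ZMod m × ZMod m)) ∧
      Sha2omega ((Mn n).res U.subtype) ≠ ⊥ := by
  haveI : NeZero m := ⟨by omega⟩
  have hcard : Fintype.card (ZMod m × ZMod m) = n := by
    rw [Fintype.card_prod, ZMod.card, hn]; ring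
  let e : (ZMod m × ZMod m) ≃ Fin n := Fintype.equivFinOfCardEq hcard
  have hm0 : 0 < m := by omega
  refine ⟨Ue e, ⟨(MonoidHom.ofInjective (rho_injective e)).symm⟩, ?_⟩
  set x : H2 ((Mn n).res (Ue e).subtype) := QuotientAddGroup.mk (fcoc e hm0) with hx
  intro hbot
  have hmem : x ∈ Sha2omega ((Mn n).res (Ue e).subtype) := by
    rw [Sha2omega, AddSubgroup.mem_iInf]
    intro g
    rw [AddMonoidHom.mem_ker]
    show QuotientAddGroup.map _ _ _ _ x = 0
    rw [hx, QuotientAddGroup.map_mk]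
    refine (QuotientAddGroup.eq_zero_iff _).mpr ?_
    rw [AddSubgroup.mem_addSubgroupOf]
    obtain ⟨cc, hcc⟩ := res_vanish e hm0 g
    refine ⟨cc, ?_⟩
    funext h₁ h₂
    show (h₁ : ↥(Ue e)) • cc h₂ - cc (h₁ * h₂) + cc h₁ = _
    exact hcc h₁ h₂
  rw [hbot] at hmem
  have hz : x = 0 := AddSubgroup.mem_bot.mp hmem
  rw [hx] at hz
  replace hz := (QuotientAddGroup.eq_zero_iff _).mp hz
  exact fcoc_not_coboundary e hm0 hm hz
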